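/- As a consequence of the theta distribution relation: for each b ≥ 0 and nonzero α ∈ O_K, the coefficient functions F_{z₀,b}(z) (defined by Θ_{z₀,0}(z,w) = ∑_{b≥0} F_{z₀,b}(z)w^{b−1}) satisfy ∑_{z_α ∈ (1/α)Γ/Γ} F_{z₀+z_α, b}(z) = α·ᾱ^{1−b}·F_{αz₀, b}(αz) as meromorphic functions of z. -/

import Mathlib

open Finset


lemma coeff_zero_zero (c : ℕ → ℂ) (r : ℝ) (hr : 0 < r)
    (h : ∀ w : ℂ, w ≠ 0 → ‖w‖ < r → HasSum (fun n => c n * w ^ n) 0) : c 0 = 0 := by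
  have hρ : 0 < r / 2 := by positivity
  have hw0 : ((r/2 : ℝ) : ℂ) ≠ 0 := by exact_mod_cast hρ.ne'
  have hnorm : ∀ s : ℝ, 0 < s → ‖((s:ℝ):ℂ)‖ = s := fun s hs => by
    rw [Complex.norm_real, Real.norm_eq_abs, abs_of_pos hs]
  have hw0r : ‖((r/2 : ℝ) : ℂ)‖ < r := by rw [hnorm _ hρ]; linarith
  have hs : Summable (fun n => c n * ((r/2:ℝ):ℂ) ^ n) := (h _ hw0 hw0r).summable
  have hsn : Summable (fun n => ‖c n‖ * (r/2) ^ n) := by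
    have h2 := (summable_norm_iff.mpr hs)
    have : (fun n => ‖c n * ((r/2:ℝ):ℂ) ^ n‖) = fun n => ‖c n‖ * (r/2)^n := by
      funext n; rw [norm_mul, norm_pow, hnorm _ hρ]
    rwa [this] at h2
  have hMn : ∀ n, ‖c n‖ * (r/2) ^ n ≤ ∑' n, ‖c n‖ * (r/2) ^ n := fun n =>
    hsn.le_tsum n (fun m _ => by positivity)
  set M : ℝ := ∑' n, ‖c n‖ * (r/2) ^ n with hM
  have hM0 : 0 ≤ M := le_trans (by positivity) (hMn 0)
  -- key estimate: for 0 < ‖w‖ ≤ r/4, ‖c 0‖ ≤ (4*M/r) * ‖w‖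
  have key : ∀ w : ℂ, w ≠ 0 → ‖w‖ ≤ r / 4 → ‖c 0‖ ≤ (4*M/r) * ‖w‖ := by
    intro w hw hwρ
    have hwpos : (0:ℝ) < ‖w‖ := norm_pos_iff.mpr hw
    have hwr : ‖w‖ < r := by linarith
    have h0 := h w hw hwr
    have h1 : HasSum (fun n => c (n+1) * w ^ (n+1)) (-(c 0)) := by
      have := (hasSum_nat_add_iff (f := fun n => c n * w ^ n) (g := -(c 0)) 1).mpr
      apply this
      simpa using h0
    have htsum : ∑' n, c (n+1) * w ^ (n+1) = -(c 0) := h1.tsum_eq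
    have hbound : ∀ n, ‖c (n+1) * w ^ (n+1)‖ ≤ ((2*M/r) * ‖w‖) * (1/2) ^ n := by
      intro n
      have hcn : ‖c (n+1)‖ * (r/2) ^ (n+1) ≤ M := hMn (n+1)
      have hρpow : (0:ℝ) < (r/2) ^ (n+1) := by positivity
      have hcn' : ‖c (n+1)‖ ≤ M / (r/2) ^ (n+1) := (le_div_iff₀ hρpow).mpr hcn
      rw [norm_mul, norm_pow]
      calc ‖c (n+1)‖ * ‖w‖ ^ (n+1) ≤ (M / (r/2) ^ (n+1)) * ‖w‖ ^ (n+1) :=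
            mul_le_mul_of_nonneg_right hcn' (by positivity)
        _ = M * (‖w‖ / (r/2)) ^ (n+1) := by rw [div_pow, div_pow]; field_simp; rw [mul_assoc, ← mul_pow]; ring
        _ ≤ ((2*M/r) * ‖w‖) * (1/2)^n := by
            have hq0 : 0 ≤ ‖w‖ / (r/2) := by positivity
            have hq : ‖w‖ / (r/2) ≤ 1/2 := by rw [div_le_iff₀ hρ]; linarith
            have hp : (‖w‖/(r/2))^(n+1) ≤ (‖w‖/(r/2)) * (1/2)^n := by
              rw [pow_succ']
              exact mul_le_mul_of_nonneg_left (pow_le_pow_left₀ hq0 hq n) hq0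
            calc M * (‖w‖/(r/2))^(n+1) ≤ M * ((‖w‖/(r/2)) * (1/2)^n) :=
                  mul_le_mul_of_nonneg_left hp hM0
              _ = ((2*M/r) * ‖w‖) * (1/2)^n := by
                  field_simp
    have hsum2 : Summable (fun n => ((2*M/r) * ‖w‖) * (1/2:ℝ) ^ n) :=
      (summable_geometric_of_lt_one (by norm_num) (by norm_num)).mul_left _
    have hns : Summable (fun n => ‖c (n+1) * w ^ (n+1)‖) :=
      Summable.of_nonneg_of_le (fun n => norm_nonneg _) hbound hsum2
    have hc0 : ‖c 0‖ = ‖∑' n, c (n+1) * w ^ (n+1)‖ := by rw [htsum, norm_neg]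
    rw [hc0]
    calc ‖∑' n, c (n+1) * w ^ (n+1)‖ ≤ ∑' n, ‖c (n+1) * w ^ (n+1)‖ :=
          norm_tsum_le_tsum_norm hns
      _ ≤ ∑' n, ((2*M/r) * ‖w‖) * (1/2:ℝ)^n := hns.tsum_le_tsum hbound hsum2
      _ = ((2*M/r) * ‖w‖) * (1 - 1/2)⁻¹ := by
          rw [tsum_mul_left, tsum_geometric_of_lt_one (by norm_num) (by norm_num)]
      _ = (4*M/r) * ‖w‖ := by ring
  -- conclude
  have hle : ∀ ε : ℝ, 0 < ε → ‖c 0‖ ≤ ε := by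
    intro ε hε
    have hK0 : (0:ℝ) ≤ 4*M/r := by positivity
    set t : ℝ := min (r/4) (ε / (4*M/r + 1)) with ht
    have ht0 : 0 < t := lt_min (by positivity) (by positivity)
    have hw : ((t:ℝ) : ℂ) ≠ 0 := by exact_mod_cast ht0.ne'
    have hwn : ‖((t:ℝ):ℂ)‖ = t := hnorm _ ht0
    have h1 := key ((t:ℝ):ℂ) hw (by rw [hwn]; exact min_le_left _ _)
    rw [hwn] at h1
    have h2 : (4*M/r) * t ≤ (4*M/r + 1) * t :=
      mul_le_mul_of_nonneg_right (by linarith) ht0.le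
    have h3 : (4*M/r + 1) * t ≤ ε := by
      have := min_le_right (r/4) (ε / (4*M/r + 1))
      calc (4*M/r + 1) * t ≤ (4*M/r + 1) * (ε / (4*M/r + 1)) :=
            mul_le_mul_of_nonneg_left this (by positivity)
        _ = ε := by field_simp
    linarith
  have hfin : ‖c 0‖ ≤ 0 := le_of_forall_pos_le_add (by intro ε hε; simpa using hle ε hε)
  simpa using le_antisymm hfin (norm_nonneg _)

lemma coeff_all_zero (c : ℕ → ℂ) (r : ℝ) (hr : 0 < r)
    (h : ∀ w : ℂ, w ≠ 0 → ‖w‖ < r → HasSum (fun n => c n * w ^ n) 0) : ∀ n, c n = 0 := by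
  intro n
  induction n using Nat.strong_induction_on with
  | _ n ih =>
    have hshift : ∀ w : ℂ, w ≠ 0 → ‖w‖ < r →
        HasSum (fun k => c (k + n) * w ^ k) 0 := by
      intro w hw hwr
      have h0 := h w hw hwr
      have h1 : HasSum (fun k => c (k + n) * w ^ (k + n)) 0 := by
        have := (hasSum_nat_add_iff (f := fun m => c m * w ^ m) (g := 0) n).mpr
        apply this
        have hz : ∑ i ∈ Finset.range n, c i * w ^ i = 0 :=
          Finset.sum_eq_zero fun i hi => by
            rw [ih i (Finset.mem_range.mp hi)]; ring
        rw [hz, add_zero]; exact h0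
      have h2 := h1.mul_right ((w ^ n)⁻¹)
      rw [zero_mul] at h2
      have heq : (fun k => c (k + n) * w ^ (k + n) * (w ^ n)⁻¹)
          = fun k => c (k + n) * w ^ k := by
        funext k
        field_simp [pow_ne_zero n hw]
        ring
      rwa [heq] at h2
    have := coeff_zero_zero (fun k => c (k + n)) r hr hshift
    simpa using this

/-- distribution relation for the coefficient functions `F_{z₀,b}(z)` of
the Kronecker theta translates `Θ_{z₀,0}(z,w) = ∑_{b≥0} F_{z₀,b}(z)w^{b−1}`: assuming
the theta distribution relation `∑_{t∈T} Θ_{z₀+t,0}(z,w) = α·Θ_{αz₀,0}(αz,w/ᾱ)`, one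
has `∑_{t∈T} F_{z₀+t,b}(z) = α·ᾱ^{1−b}·F_{αz₀,b}(αz)` for every `b ≥ 0`. -/
theorem stmt_15 (θ : ℂ → ℂ) (A : ℝ) (hA : 0 < A)
    (Θ : ℂ → ℂ → ℂ → ℂ)
    (hΘ : ∀ c x w : ℂ, Θ c x w =
      Complex.exp (-(w * (starRingEnd ℂ) c) / (A : ℂ)) *
        (θ (x + c + w) / (θ (x + c) * θ w)))
    (α : ℂ) (hα : α ≠ 0)
    (T : Finset ℂ)
    (F : ℂ → ℕ → ℂ → ℂ) (r : ℝ) (hr : 0 < r)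
    (hF : ∀ (c x : ℂ) (w : ℂ), w ≠ 0 → ‖w‖ < r →
      HasSum (fun b : ℕ => F c b x * w ^ b) (w * Θ c x w))
    (z₀ z : ℂ)
    (hdist : ∀ w : ℂ, w ≠ 0 →
      ∑ t ∈ T, Θ (z₀ + t) z w = α * Θ (α * z₀) (α * z) (w / (starRingEnd ℂ) α)) :
    ∀ b : ℕ, ∑ t ∈ T, F (z₀ + t) b z =
      α * ((starRingEnd ℂ) α) ^ (1 - (b : ℤ)) * F (α * z₀) b (α * z) := by
  set ᾱ : ℂ := (starRingEnd ℂ) α with hᾱdef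
  have hᾱ : ᾱ ≠ 0 := by
    intro h
    apply hα
    have := congrArg (starRingEnd ℂ) h
    simpa [hᾱdef] using this
  have hᾱn : 0 < ‖ᾱ‖ := norm_pos_iff.mpr hᾱ
  set r' : ℝ := min r (r * ‖ᾱ‖) with hr'def
  have hr' : 0 < r' := lt_min hr (by positivity)
  set c : ℕ → ℂ := fun b =>
    (∑ t ∈ T, F (z₀ + t) b z) - α * ᾱ ^ (1 - (b : ℤ)) * F (α * z₀) b (α * z) with hc
  have key : ∀ w : ℂ, w ≠ 0 → ‖w‖ < r' → HasSum (fun b => c b * w ^ b) 0 := by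
    intro w hw hwr
    have hwr1 : ‖w‖ < r := lt_of_lt_of_le hwr (min_le_left _ _)
    have hwr2 : ‖w‖ < r * ‖ᾱ‖ := lt_of_lt_of_le hwr (min_le_right _ _)
    -- first sum
    have h1 : HasSum (fun b => (∑ t ∈ T, F (z₀ + t) b z) * w ^ b)
        (∑ t ∈ T, w * Θ (z₀ + t) z w) := by
      have := hasSum_sum (f := fun (t : ℂ) (b : ℕ) => F (z₀ + t) b z * w ^ b)
        (s := T) (a := fun t => w * Θ (z₀ + t) z w)
        (fun t _ => hF (z₀ + t) z w hw hwr1)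
      have heq : (fun b => ∑ t ∈ T, F (z₀ + t) b z * w ^ b)
          = fun b => (∑ t ∈ T, F (z₀ + t) b z) * w ^ b := by
        funext b; rw [Finset.sum_mul]
      rwa [heq] at this
    -- second series at u = w / ᾱ
    have hu : w / ᾱ ≠ 0 := div_ne_zero hw hᾱ
    have hur : ‖w / ᾱ‖ < r := by
      rw [norm_div, div_lt_iff₀ hᾱn]; exact hwr2
    have h2 := (hF (α * z₀) (α * z) (w / ᾱ) hu hur).mul_left (α * ᾱ)
    have h2' : HasSum (fun (b : ℕ) => (α * ᾱ ^ (1 - (b : ℤ)) * F (α * z₀) b (α * z)) * w ^ b)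
        (α * w * Θ (α * z₀) (α * z) (w / ᾱ)) := by
      have heq : (fun (b : ℕ) => (α * ᾱ) * (F (α * z₀) b (α * z) * (w / ᾱ) ^ b))
          = fun (b : ℕ) => (α * ᾱ ^ (1 - (b : ℤ)) * F (α * z₀) b (α * z)) * w ^ b := by
        funext b
        rw [zpow_sub₀ hᾱ, zpow_one, zpow_natCast, div_pow]
        field_simp
      have hval : (α * ᾱ) * ((w / ᾱ) * Θ (α * z₀) (α * z) (w / ᾱ))
          = α * w * Θ (α * z₀) (α * z) (w / ᾱ) := by
        field_simp
      rw [heq, hval] at h2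
      exact h2
    have hvals : ∑ t ∈ T, w * Θ (z₀ + t) z w = α * w * Θ (α * z₀) (α * z) (w / ᾱ) := by
      rw [← Finset.mul_sum, hdist w hw]; ring
    have := h1.sub h2'
    rw [hvals, sub_self] at this
    have heq2 : (fun (b : ℕ) => (∑ t ∈ T, F (z₀ + t) b z) * w ^ b
        - (α * ᾱ ^ (1 - (b : ℤ)) * F (α * z₀) b (α * z)) * w ^ b)
        = fun b => c b * w ^ b := by
      funext b; rw [hc]; ring
    rwa [heq2] at this
  intro b
  have := coeff_all_zero c r' hr' key b
  rw [hc] at this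
  have h := sub_eq_zero.mp this
  exact h
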